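/- arXiv:1612.04980 — 2 statements merged into one kernel-verified Lean document; each statement's English description precedes it below -/
import Mathlib

section
/- For every nonempty finite digraph D with DAG-depth ddp(D) = k, there exists a valid DAG-depth decomposition (P, org) of D whose depth is exactly k. -/
open scoped Classical

noncomputable section

/-- A finite directed graph: a finite vertex set together with an adjacency
relation whose edges join vertices of the graph. -/
structure FinDigraph (α : Type) where
  verts : Finset α
  Adj : α → α → Prop
  adj_mem : ∀ u v, Adj u v → u ∈ verts ∧ v ∈ verts

namespace FinDigraph

variable {α β : Type}

/-- The out-neighbourhood `N⁺_D(v)`. -/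
def outNbhd (D : FinDigraph α) (v : α) : Set α := {u | D.Adj v u}

/-- The set of vertices reachable from `s` by a (possibly trivial) directed path. -/
def reachSet (D : FinDigraph α) (s : α) : Finset α :=
  D.verts.filter fun v => Relation.ReflTransGen D.Adj s v

/-- A reachable fragment: an inclusion-maximal set among the reachable sets. -/
def IsFragment (D : FinDigraph α) (R : Finset α) : Prop :=
  (∃ s ∈ D.verts, R = D.reachSet s) ∧
  ∀ s ∈ D.verts, R ⊆ D.reachSet s → R = D.reachSet s

/-- The collection of all reachable fragments of `D`. -/
def fragments (D : FinDigraph α) : Finset (Finset α) :=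
  D.verts.powerset.filter fun R => D.IsFragment R

/-- The induced subdigraph `D[S]`. -/
def induce (D : FinDigraph α) (S : Finset α) : FinDigraph α where
  verts := D.verts ∩ S
  Adj u v := D.Adj u v ∧ u ∈ S ∧ v ∈ S
  adj_mem := fun u v h => ⟨Finset.mem_inter.mpr ⟨(D.adj_mem u v h.1).1, h.2.1⟩,
    Finset.mem_inter.mpr ⟨(D.adj_mem u v h.1).2, h.2.2⟩⟩

/-- Deletion of a vertex: `D − v = D[V(D) ∖ {v}]`. -/
def deleteVert (D : FinDigraph α) (v : α) : FinDigraph α :=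
  D.induce (D.verts.erase v)

/-- Fuel-based helper for DAG-depth; the fuel `|V(D)|` always suffices since each
recursive call strictly decreases the number of vertices. -/
def ddpAux : ℕ → FinDigraph α → ℕ
  | 0, _ => 0
  | n+1, D =>
    if hcard : D.verts.card ≤ 1 then 1
    else if D.fragments.card = 1 then
      1 + D.verts.inf' (Finset.card_pos.mp (by omega)) fun v => ddpAux n (D.deleteVert v)
    else
      D.fragments.sup fun R => ddpAux n (D.induce R)

/-- The DAG-depth of a digraph. -/
def ddp (D : FinDigraph α) : ℕ := ddpAux D.verts.card D

/-- A DAG: a (finite) digraph with no directed cycles. -/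
def IsDag (P : FinDigraph α) : Prop := ∀ v, ¬ Relation.TransGen P.Adj v v

/-- A root of a DAG: a vertex of indegree zero. -/
def IsRoot (P : FinDigraph α) (r : α) : Prop := r ∈ P.verts ∧ ∀ u, ¬ P.Adj u r

/-- `y` is a descendant of `x`: there is a (possibly trivial) directed path from `x` to `y`. -/
def Desc (P : FinDigraph α) (x y : α) : Prop := Relation.ReflTransGen P.Adj x y

/-- `l` is a directed path in `P` starting at a root of `P` and ending at `v`. -/
def IsRootPath (P : FinDigraph α) (l : List α) (v : α) : Prop :=
  l ≠ [] ∧ l.Chain' P.Adj ∧ (∀ x ∈ l, x ∈ P.verts) ∧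
  (∃ r, l.head? = some r ∧ P.IsRoot r) ∧ l.getLast? = some v

/-- The depth of a DAG: the maximum number of vertices on a directed path. -/
def depth (P : FinDigraph α) : ℕ :=
  sSup {n : ℕ | ∃ l : List α, l.Chain' P.Adj ∧ (∀ x ∈ l, x ∈ P.verts) ∧ l.length = n}

/-- The Neighbor cover condition for a DAG-depth decomposition `(P, org)` of `D`. -/
def NeighborCover (D : FinDigraph α) (P : FinDigraph β) (org : β → α) : Prop :=
  ∀ v' ∈ P.verts, ∀ u, D.Adj (org v') u →
    (∃ u' ∈ P.verts, org u' = u ∧ P.Desc v' u') ∨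
    (∀ l, P.IsRootPath l v' → ∃ u' ∈ l, org u' = u)

/-- `(P, org)` is a valid DAG-depth decomposition of `D`: `P` is a DAG, `org` maps
`V(P)` onto `V(D)`, and the Neighbor cover condition holds. -/
def IsValidDecomp (D : FinDigraph α) (P : FinDigraph β) (org : β → α) : Prop :=
  P.IsDag ∧ (∀ v' ∈ P.verts, org v' ∈ D.verts) ∧
  (∀ v ∈ D.verts, ∃ v' ∈ P.verts, org v' = v) ∧
  NeighborCover D P org

end FinDigraph

namespace FinDigraph

variable {α : Type}

/-! ### Basic lemmas -/

lemma mem_reachSet {D : FinDigraph α} {s v : α} :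
    v ∈ D.reachSet s ↔ v ∈ D.verts ∧ Relation.ReflTransGen D.Adj s v := by
  simp [reachSet]

lemma reachSet_closed {D : FinDigraph α} {s u w : α} (hu : u ∈ D.reachSet s)
    (h : D.Adj u w) : w ∈ D.reachSet s :=
  mem_reachSet.mpr ⟨(D.adj_mem u w h).2, (mem_reachSet.mp hu).2.tail h⟩

lemma mem_fragments {D : FinDigraph α} {R : Finset α} :
    R ∈ D.fragments ↔ R ⊆ D.verts ∧ D.IsFragment R := by
  simp [fragments, Finset.mem_filter, Finset.mem_powerset]

lemma frag_nonempty {D : FinDigraph α} {R : Finset α} (h : R ∈ D.fragments) : R.Nonempty := by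
  obtain ⟨-, ⟨s, hs, rfl⟩, -⟩ := mem_fragments.mp h
  exact ⟨s, mem_reachSet.mpr ⟨hs, .refl⟩⟩

lemma exists_fragment_superset {D : FinDigraph α} {v : α} (hv : v ∈ D.verts) :
    ∃ R ∈ D.fragments, D.reachSet v ⊆ R := by
  classical
  set T : Finset (Finset α) := (D.verts.image fun s => D.reachSet s).filter
      (fun R => D.reachSet v ⊆ R) with hT
  have hvT : D.reachSet v ∈ T := by
    rw [hT, Finset.mem_filter, Finset.mem_image]
    exact ⟨⟨v, hv, rfl⟩, le_rfl⟩
  obtain ⟨R, hR, hmax⟩ := T.exists_maximal ⟨_, hvT⟩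
  rw [hT, Finset.mem_filter, Finset.mem_image] at hR
  obtain ⟨⟨s₀, hs₀, rfl⟩, hsub⟩ := hR
  refine ⟨_, mem_fragments.mpr ⟨Finset.filter_subset _ _, ⟨⟨s₀, hs₀, rfl⟩, ?_⟩⟩, hsub⟩
  intro s hs hsubs
  by_contra hne
  refine hne (le_antisymm hsubs (hmax (?_ : D.reachSet s ∈ T) hsubs))
  rw [hT, Finset.mem_filter, Finset.mem_image]
  exact ⟨⟨s, hs, rfl⟩, hsub.trans hsubs⟩

lemma fragments_nonempty {D : FinDigraph α} (h : D.verts.Nonempty) : D.fragments.Nonempty := by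
  obtain ⟨v, hv⟩ := h
  obtain ⟨R, hR, -⟩ := exists_fragment_superset hv
  exact ⟨R, hR⟩

lemma frag_ne_verts {D : FinDigraph α} (hf : D.fragments.card ≠ 1) {R : Finset α}
    (hR : R ∈ D.fragments) : R ≠ D.verts := by
  intro heq
  apply hf
  obtain ⟨hsub, ⟨s₀, hs₀, hR0⟩, -⟩ := mem_fragments.mp hR
  have huniq : ∀ R' ∈ D.fragments, R' = R := by
    intro R' hR'
    obtain ⟨hsub', -, hmax'⟩ := mem_fragments.mp hR'
    have h1 : R' ⊆ D.reachSet s₀ := by rw [← hR0, heq]; exact hsub'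
    rw [hR0]
    exact hmax' s₀ hs₀ h1
  have : D.fragments = {R} := Finset.eq_singleton_iff_unique_mem.mpr ⟨hR, huniq⟩
  rw [this, Finset.card_singleton]

lemma card_lt_of_frag {D : FinDigraph α} (hf : D.fragments.card ≠ 1) {R : Finset α}
    (hR : R ∈ D.fragments) : R.card < D.verts.card :=
  Finset.card_lt_card (lt_of_le_of_ne (mem_fragments.mp hR).1 (frag_ne_verts hf hR))

lemma induce_verts {D : FinDigraph α} {S : Finset α} (h : S ⊆ D.verts) :
    (D.induce S).verts = S := Finset.inter_eq_right.mpr h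

lemma deleteVert_verts {D : FinDigraph α} {v : α} :
    (D.deleteVert v).verts = D.verts.erase v :=
  induce_verts (Finset.erase_subset _ _)

/-! ### ddp equations -/

lemma ddpAux_succ (n : ℕ) (D : FinDigraph α) : ddpAux (n+1) D =
    if hcard : D.verts.card ≤ 1 then 1
    else if D.fragments.card = 1 then
      1 + D.verts.inf' (Finset.card_pos.mp (by omega)) fun v => ddpAux n (D.deleteVert v)
    else
      D.fragments.sup fun R => ddpAux n (D.induce R) := rfl

lemma ddpAux_fuel : ∀ (n m : ℕ) (D : FinDigraph α), D.verts.Nonempty →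
    D.verts.card ≤ n → D.verts.card ≤ m → ddpAux n D = ddpAux m D := by
  intro n
  induction n with
  | zero =>
    intro m D hne hn _
    have := Finset.card_pos.mpr hne
    omega
  | succ n ih =>
    intro m D hne hn hm
    have hpos : 0 < D.verts.card := Finset.card_pos.mpr hne
    obtain ⟨m, rfl⟩ : ∃ m', m = m' + 1 := ⟨m - 1, by omega⟩
    rw [ddpAux_succ, ddpAux_succ]
    by_cases h1 : D.verts.card ≤ 1
    · simp [h1]
    · rw [dif_neg h1, dif_neg h1]
      by_cases hf : D.fragments.card = 1
      · rw [if_pos hf, if_pos hf]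
        congr 1
        refine Finset.inf'_congr _ rfl fun v hv => ?_
        have hdel : (D.deleteVert v).verts.card = D.verts.card - 1 := by
          rw [deleteVert_verts, Finset.card_erase_of_mem hv]
        have hdne : (D.deleteVert v).verts.Nonempty := by
          rw [← Finset.card_pos, hdel]; omega
        exact ih m _ hdne (by omega) (by omega)
      · rw [if_neg hf, if_neg hf]
        apply Finset.sup_congr rfl
        intro R hR
        have hsub := (mem_fragments.mp hR).1
        have hlt : R.card < D.verts.card := card_lt_of_frag hf hR
        have hvR : (D.induce R).verts = R := induce_verts hsub
        have hneR : (D.induce R).verts.Nonempty := by rw [hvR]; exact frag_nonempty hR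
        exact ih m _ hneR (by rw [hvR]; omega) (by rw [hvR]; omega)

lemma ddp_of_card_one {D : FinDigraph α} (h : D.verts.card = 1) : ddp D = 1 := by
  rw [ddp, h, show (1:ℕ) = 0 + 1 from rfl, ddpAux_succ, dif_pos (by omega)]

lemma ddp_single_frag {D : FinDigraph α} (h2 : 2 ≤ D.verts.card)
    (hf : D.fragments.card = 1) :
    ddp D = 1 + D.verts.inf' (Finset.card_pos.mp (by omega)) fun v => ddp (D.deleteVert v) := by
  obtain ⟨n, hn⟩ : ∃ n, D.verts.card = n + 1 := ⟨D.verts.card - 1, by omega⟩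
  have h0 : ddp D = ddpAux (n+1) D := by rw [ddp, hn]
  rw [h0, ddpAux_succ, dif_neg (by omega), if_pos hf]
  congr 1
  refine Finset.inf'_congr _ rfl fun v hv => ?_
  have hdel : (D.deleteVert v).verts.card = n := by
    rw [deleteVert_verts, Finset.card_erase_of_mem hv]; omega
  rw [ddp, hdel]

lemma ddp_multi_frag {D : FinDigraph α} (h2 : 2 ≤ D.verts.card)
    (hf : D.fragments.card ≠ 1) :
    ddp D = D.fragments.sup fun R => ddp (D.induce R) := by
  obtain ⟨n, hn⟩ : ∃ n, D.verts.card = n + 1 := ⟨D.verts.card - 1, by omega⟩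
  have h0 : ddp D = ddpAux (n+1) D := by rw [ddp, hn]
  rw [h0, ddpAux_succ, dif_neg (by omega), if_neg hf]
  apply Finset.sup_congr rfl
  intro R hR
  have hsub := (mem_fragments.mp hR).1
  have hlt : R.card < D.verts.card := card_lt_of_frag hf hR
  have hvR : (D.induce R).verts = R := induce_verts hsub
  have hneR : (D.induce R).verts.Nonempty := by rw [hvR]; exact frag_nonempty hR
  rw [ddp]
  exact ddpAux_fuel n _ _ hneR (by rw [hvR]; omega) (by rw [hvR])

/-! ### DAG structural lemmas -/

variable {β : Type}

lemma chain'_transGen_get {R : β → β → Prop} {l : List β} (hc : l.Chain' R) :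
    ∀ (j : ℕ) (hj : j < l.length) (i : ℕ) (hij : i < j),
      Relation.TransGen R (l.get ⟨i, by omega⟩) (l.get ⟨j, hj⟩) := by
  intro j
  induction j with
  | zero => intro hj i hij; exact absurd hij (by omega)
  | succ j ihj =>
    intro hj i hij
    have hstep : R (l.get ⟨j, by omega⟩) (l.get ⟨j+1, by omega⟩) :=
      List.isChain_iff_getElem.mp hc j (by omega)
    rcases Nat.lt_or_ge i j with h | h
    · exact (ihj (by omega) i h).tail hstep
    · have : i = j := by omega
      subst this
      exact .single hstep

lemma chain_nodup {P : FinDigraph β} (hdag : P.IsDag) {l : List β}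
    (hc : l.Chain' P.Adj) : l.Nodup := by
  rw [List.nodup_iff_injective_get]
  rintro ⟨i, hi⟩ ⟨j, hj⟩ hij
  rcases lt_trichotomy i j with h | h | h
  · have := chain'_transGen_get hc j hj i h
    rw [hij] at this
    exact absurd this (hdag _)
  · exact Fin.ext h
  · have := chain'_transGen_get hc i hi j h
    rw [hij] at this
    exact absurd this (hdag _)

lemma chain_length_le {P : FinDigraph β} (hdag : P.IsDag) {l : List β}
    (hc : l.Chain' P.Adj) (hm : ∀ x ∈ l, x ∈ P.verts) : l.length ≤ P.verts.card := by
  classical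
  have hnd := chain_nodup hdag hc
  calc l.length = l.toFinset.card := (List.toFinset_card_of_nodup hnd).symm
  _ ≤ P.verts.card := Finset.card_le_card (fun x hx => hm x (List.mem_toFinset.mp hx))

/-- The set of lengths of directed paths in `P`. -/
def depthSet (P : FinDigraph β) : Set ℕ :=
  {n | ∃ l : List β, l.Chain' P.Adj ∧ (∀ x ∈ l, x ∈ P.verts) ∧ l.length = n}

lemma depth_eq_sSup (P : FinDigraph β) : depth P = sSup (depthSet P) := rfl

lemma depthSet_nonempty (P : FinDigraph β) : (depthSet P).Nonempty :=
  ⟨0, [], by simp [List.Chain'], by simp, rfl⟩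

lemma depthSet_bddAbove {P : FinDigraph β} (hdag : P.IsDag) : BddAbove (depthSet P) :=
  ⟨P.verts.card, fun n ⟨l, hc, hm, hl⟩ => hl ▸ chain_length_le hdag hc hm⟩

lemma le_depth {P : FinDigraph β} (hdag : P.IsDag) {n : ℕ} (hn : n ∈ depthSet P) :
    n ≤ depth P := le_csSup (depthSet_bddAbove hdag) hn

lemma depth_le {P : FinDigraph β} {m : ℕ} (h : ∀ n ∈ depthSet P, n ≤ m) : depth P ≤ m :=
  csSup_le (depthSet_nonempty P) h

lemma exists_depth_chain {P : FinDigraph β} (hdag : P.IsDag) : depth P ∈ depthSet P :=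
  Nat.sSup_mem (depthSet_nonempty P) (depthSet_bddAbove hdag)

lemma chain'_pred {R : β → β → Prop} :
    ∀ (a : β) (t : List β), (a :: t).Chain' R → ∀ x ∈ t, ∃ p, R p x := by
  intro a t
  induction t generalizing a with
  | nil => intro _ x hx; exact absurd hx List.not_mem_nil
  | cons b t ih =>
    intro hc x hx
    rcases List.mem_cons.mp hx with rfl | hx
    · exact ⟨a, (List.isChain_cons_cons.mp hc).1⟩
    · exact ih b (List.isChain_cons_cons.mp hc).2 x hx

lemma exists_root_aux {P : FinDigraph β} (hdag : P.IsDag) :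
    ∀ (n : ℕ) (v : β), v ∈ P.verts →
      (P.verts.filter fun u => Relation.TransGen P.Adj u v).card ≤ n →
      ∃ r, P.IsRoot r ∧ Relation.ReflTransGen P.Adj r v := by
  classical
  intro n
  induction n with
  | zero =>
    intro v hv hcard
    by_cases hroot : ∀ u, ¬ P.Adj u v
    · exact ⟨v, ⟨hv, hroot⟩, .refl⟩
    · push_neg at hroot
      obtain ⟨u, hu⟩ := hroot
      have humem : u ∈ P.verts.filter fun w => Relation.TransGen P.Adj w v :=
        Finset.mem_filter.mpr ⟨(P.adj_mem u v hu).1, .single hu⟩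
      have := Finset.card_pos.mpr ⟨u, humem⟩
      omega
  | succ n ih =>
    intro v hv hcard
    by_cases hroot : ∀ u, ¬ P.Adj u v
    · exact ⟨v, ⟨hv, hroot⟩, .refl⟩
    · push_neg at hroot
      obtain ⟨u, hu⟩ := hroot
      have humem : u ∈ P.verts.filter fun w => Relation.TransGen P.Adj w v :=
        Finset.mem_filter.mpr ⟨(P.adj_mem u v hu).1, .single hu⟩
      have hsub : (P.verts.filter fun w => Relation.TransGen P.Adj w u) ⊆
          (P.verts.filter fun w => Relation.TransGen P.Adj w v).erase u := by
        intro w hw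
        obtain ⟨hw1, hw2⟩ := Finset.mem_filter.mp hw
        refine Finset.mem_erase.mpr ⟨?_, Finset.mem_filter.mpr ⟨hw1, hw2.tail hu⟩⟩
        rintro rfl
        exact hdag _ hw2
      have hle : (P.verts.filter fun w => Relation.TransGen P.Adj w u).card ≤ n := by
        have h1 := Finset.card_le_card hsub
        rw [Finset.card_erase_of_mem humem] at h1
        omega
      obtain ⟨r, hr, hru⟩ := ih u (P.adj_mem u v hu).1 hle
      exact ⟨r, hr, hru.tail hu⟩

lemma exists_root_reach {P : FinDigraph β} (hdag : P.IsDag) {v : β} (hv : v ∈ P.verts) :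
    ∃ r, P.IsRoot r ∧ Relation.ReflTransGen P.Adj r v :=
  exists_root_aux hdag _ v hv le_rfl

lemma extend_to_root_aux {P : FinDigraph β} (hdag : P.IsDag) :
    ∀ (n : ℕ) (l : List β), l.Chain' P.Adj → (∀ x ∈ l, x ∈ P.verts) → l ≠ [] →
      P.verts.card - l.length ≤ n →
      ∃ m : List β, m.Chain' P.Adj ∧ (∀ x ∈ m, x ∈ P.verts) ∧ l.length ≤ m.length ∧
        ∃ r, m.head? = some r ∧ P.IsRoot r := by
  intro n
  induction n with
  | zero =>
    intro l hc hm hne hfuel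
    obtain ⟨h, t, rfl⟩ := List.exists_cons_of_ne_nil hne
    by_cases hroot : ∀ u, ¬ P.Adj u h
    · exact ⟨h :: t, hc, hm, le_rfl, h, rfl, hm h (by simp), hroot⟩
    · push_neg at hroot
      obtain ⟨u, hu⟩ := hroot
      have hc' : (u :: h :: t).Chain' P.Adj := List.isChain_cons_cons.mpr ⟨hu, hc⟩
      have hm' : ∀ x ∈ u :: h :: t, x ∈ P.verts := by
        intro x hx
        rcases List.mem_cons.mp hx with rfl | hx
        · exact (P.adj_mem _ _ hu).1
        · exact hm x hx
      have hlen := chain_length_le hdag hc' hm'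
      simp only [List.length_cons] at hlen hfuel
      omega
  | succ n ih =>
    intro l hc hm hne hfuel
    obtain ⟨h, t, rfl⟩ := List.exists_cons_of_ne_nil hne
    by_cases hroot : ∀ u, ¬ P.Adj u h
    · exact ⟨h :: t, hc, hm, le_rfl, h, rfl, hm h (by simp), hroot⟩
    · push_neg at hroot
      obtain ⟨u, hu⟩ := hroot
      have hc' : (u :: h :: t).Chain' P.Adj := List.isChain_cons_cons.mpr ⟨hu, hc⟩
      have hm' : ∀ x ∈ u :: h :: t, x ∈ P.verts := by
        intro x hx
        rcases List.mem_cons.mp hx with rfl | hx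
        · exact (P.adj_mem _ _ hu).1
        · exact hm x hx
      obtain ⟨m, h1, h2, h3, h4⟩ := ih (u :: h :: t) hc' hm' (by simp)
        (by simp only [List.length_cons] at hfuel ⊢; omega)
      refine ⟨m, h1, h2, ?_, h4⟩
      simp only [List.length_cons] at h3 ⊢
      omega

lemma extend_to_root {P : FinDigraph β} (hdag : P.IsDag) {l : List β}
    (hc : l.Chain' P.Adj) (hm : ∀ x ∈ l, x ∈ P.verts) (hne : l ≠ []) :
    ∃ m : List β, m.Chain' P.Adj ∧ (∀ x ∈ m, x ∈ P.verts) ∧ l.length ≤ m.length ∧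
      ∃ r, m.head? = some r ∧ P.IsRoot r :=
  extend_to_root_aux hdag _ l hc hm hne (Nat.sub_le _ _)

lemma mem_of_getLast?' {l : List β} {a : β} (h : l.getLast? = some a) : a ∈ l := by
  induction l with
  | nil => simp at h
  | cons x t ih =>
    cases t with
    | nil => simp at h; simp [h]
    | cons y t' =>
      rw [List.getLast?_cons_cons] at h
      exact List.mem_cons_of_mem _ (ih h)

/-! ### The singleton decomposition -/

/-- The one-vertex DAG. -/
def singleP : FinDigraph ℕ where
  verts := {0}
  Adj _ _ := False
  adj_mem := fun _ _ h => h.elim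

lemma singleP_dag : singleP.IsDag := by
  intro v h
  cases h with
  | single h => exact h
  | tail _ h => exact h

lemma singleP_depth : depth singleP = 1 := by
  apply le_antisymm
  · apply depth_le
    rintro n ⟨l, hc, hm, rfl⟩
    match l with
    | [] => simp
    | [x] => simp
    | x :: y :: t => exact absurd (List.isChain_cons_cons.mp hc).1 (fun h => h)
  · exact le_depth singleP_dag ⟨[0], by simp [List.Chain'], by intro x hx; simp at hx; simp [hx, singleP], rfl⟩

/-! ### The cone construction: a new root above a DAG -/

/-- Add a new root `0` above a shifted copy of `P`, with edges to the shifted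
roots of `P`. -/
def cone (P : FinDigraph ℕ) : FinDigraph ℕ where
  verts := insert 0 (P.verts.image (· + 1))
  Adj x y := (∃ a b, P.Adj a b ∧ x = a + 1 ∧ y = b + 1) ∨
    (x = 0 ∧ ∃ r, P.IsRoot r ∧ y = r + 1)
  adj_mem := by
    rintro u v (⟨a, b, hab, rfl, rfl⟩ | ⟨rfl, r, hr, rfl⟩)
    · exact ⟨Finset.mem_insert_of_mem (Finset.mem_image_of_mem _ (P.adj_mem a b hab).1),
        Finset.mem_insert_of_mem (Finset.mem_image_of_mem _ (P.adj_mem a b hab).2)⟩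
    · exact ⟨Finset.mem_insert_self _ _,
        Finset.mem_insert_of_mem (Finset.mem_image_of_mem _ hr.1)⟩

lemma cone_mem {P : FinDigraph ℕ} {x : ℕ} :
    x ∈ (cone P).verts ↔ x = 0 ∨ ∃ a ∈ P.verts, x = a + 1 := by
  constructor
  · intro h
    rcases Finset.mem_insert.mp h with rfl | h
    · exact Or.inl rfl
    · obtain ⟨a, ha, rfl⟩ := Finset.mem_image.mp h
      exact Or.inr ⟨a, ha, rfl⟩
  · rintro (rfl | ⟨a, ha, rfl⟩)
    · exact Finset.mem_insert_self _ _
    · exact Finset.mem_insert_of_mem (Finset.mem_image_of_mem _ ha)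

lemma cone_no_in_zero {P : FinDigraph ℕ} {x : ℕ} : ¬ (cone P).Adj x 0 := by
  rintro (⟨a, b, hab, hx, hy⟩ | ⟨hx, r, hr, hy⟩) <;> omega

lemma cone_transGen {P : FinDigraph ℕ} {x y : ℕ}
    (h : Relation.TransGen (cone P).Adj x y) :
    (∃ b, y = b + 1) ∧
      (x = 0 ∨ ∃ a b, x = a + 1 ∧ y = b + 1 ∧ Relation.TransGen P.Adj a b) := by
  induction h with
  | single h =>
    rcases h with ⟨a, b, hab, rfl, rfl⟩ | ⟨rfl, r, hr, rfl⟩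
    · exact ⟨⟨b, rfl⟩, .inr ⟨a, b, rfl, rfl, .single hab⟩⟩
    · exact ⟨⟨r, rfl⟩, .inl rfl⟩
  | tail hxz hstep ih =>
    rcases hstep with ⟨a, b, hab, hEq, rfl⟩ | ⟨hEq, r, hr, rfl⟩
    · refine ⟨⟨b, rfl⟩, ?_⟩
      rcases ih.2 with hx0 | ⟨a', b', rfl, hzb', htg⟩
      · exact .inl hx0
      · have hab' : a = b' := by omega
        subst hab'
        exact .inr ⟨a', b, rfl, rfl, htg.tail hab⟩
    · obtain ⟨b, hzb⟩ := ih.1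
      omega

lemma cone_dag {P : FinDigraph ℕ} (hdag : P.IsDag) : (cone P).IsDag := by
  intro v h
  obtain ⟨⟨b, rfl⟩, h2⟩ := cone_transGen h
  rcases h2 with h0 | ⟨a, b', ha, hb', htg⟩
  · omega
  · have h1 : a = b := by omega
    have h2' : b' = b := by omega
    subst h1; subst h2'
    exact hdag _ htg

lemma cone_root_zero {P : FinDigraph ℕ} : (cone P).IsRoot 0 :=
  ⟨Finset.mem_insert_self _ _, fun _ => cone_no_in_zero⟩

lemma cone_root_eq_zero {P : FinDigraph ℕ} {r : ℕ} (hr : (cone P).IsRoot r) : r = 0 := by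
  by_contra hne
  rcases cone_mem.mp hr.1 with rfl | ⟨a, ha, rfl⟩
  · exact hne rfl
  · by_cases hroot : P.IsRoot a
    · exact hr.2 0 (.inr ⟨rfl, a, hroot, rfl⟩)
    · have : ∃ u, P.Adj u a := by
        by_contra hno
        push_neg at hno
        exact hroot ⟨ha, hno⟩
      obtain ⟨u, hu⟩ := this
      exact hr.2 (u + 1) (.inl ⟨u, a, hu, rfl, rfl⟩)

lemma cone_adj_down {P : FinDigraph ℕ} {x y : ℕ} (h : (cone P).Adj x y) (hx : x ≠ 0) :
    P.Adj (x - 1) (y - 1) := by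
  rcases h with ⟨a, b, hab, rfl, rfl⟩ | ⟨rfl, _⟩
  · simpa using hab
  · exact absurd rfl hx

lemma cone_chain_down {P : FinDigraph ℕ} :
    ∀ (t : List ℕ), t.Chain' (cone P).Adj → (∀ x ∈ t, x ≠ 0) →
      (t.map (· - 1)).Chain' P.Adj := by
  intro t
  induction t with
  | nil => intro _ _; simp [List.Chain']
  | cons x t ih =>
    intro hc h0
    cases t with
    | nil => simp [List.Chain']
    | cons y t' =>
      obtain ⟨hxy, hc'⟩ := List.isChain_cons_cons.mp hc
      have hih := ih hc' (fun z hz => h0 z (List.mem_cons_of_mem _ hz))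
      rw [List.map_cons] at hih ⊢
      rw [List.map_cons]
      exact List.isChain_cons_cons.mpr ⟨cone_adj_down hxy (h0 x (by simp)), hih⟩

lemma cone_chain_up {P : FinDigraph ℕ} {l : List ℕ} (hc : l.Chain' P.Adj) :
    (l.map (· + 1)).Chain' (cone P).Adj := by
  rw [List.Chain', List.isChain_map]
  exact List.IsChain.imp (fun a b h => Or.inl ⟨a, b, h, rfl, rfl⟩) hc

lemma cone_desc_up {P : FinDigraph ℕ} {a b : ℕ} (h : Relation.ReflTransGen P.Adj a b) :
    Relation.ReflTransGen (cone P).Adj (a + 1) (b + 1) :=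
  Relation.ReflTransGen.lift (p := (cone P).Adj) (· + 1) (fun x y hxy => Or.inl ⟨x, y, hxy, rfl, rfl⟩) _ _ h

lemma cone_depth {P : FinDigraph ℕ} (hdag : P.IsDag) : depth (cone P) = depth P + 1 := by
  apply le_antisymm
  · apply depth_le
    rintro n ⟨l, hc, hm, rfl⟩
    by_cases h0 : 0 ∈ l
    · obtain ⟨x, t, rfl⟩ : ∃ x t, l = x :: t :=
        List.exists_cons_of_ne_nil (by rintro rfl; simp at h0)
      have hx0 : x = 0 := by
        by_contra hne
        have h0t : 0 ∈ t := by
          rcases List.mem_cons.mp h0 with h | h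
          · exact absurd h.symm hne
          · exact h
        obtain ⟨p, hp⟩ := chain'_pred x t hc 0 h0t
        exact cone_no_in_zero hp
      subst hx0
      have ht0 : ∀ z ∈ t, z ≠ 0 := by
        intro z hz hz0
        subst hz0
        obtain ⟨p, hp⟩ := chain'_pred 0 t hc 0 hz
        exact cone_no_in_zero hp
      have hcd := cone_chain_down t hc.tail ht0
      have hmem : ∀ z ∈ t.map (· - 1), z ∈ P.verts := by
        intro z hz
        obtain ⟨w, hw, rfl⟩ := List.mem_map.mp hz
        have hw' := hm w (List.mem_cons_of_mem _ hw)
        rcases cone_mem.mp hw' with rfl | ⟨a, ha, rfl⟩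
        · exact absurd rfl (ht0 _ hw)
        · simpa using ha
      have hlen : t.length ≤ depth P := by
        have := le_depth hdag ⟨t.map (· - 1), hcd, hmem, rfl⟩
        simpa using this
      simp only [List.length_cons]
      omega
    · have ht0 : ∀ z ∈ l, z ≠ 0 := fun z hz h => h0 (h ▸ hz)
      have hcd := cone_chain_down l hc ht0
      have hmem : ∀ z ∈ l.map (· - 1), z ∈ P.verts := by
        intro z hz
        obtain ⟨w, hw, rfl⟩ := List.mem_map.mp hz
        have hw' := hm w hw
        rcases cone_mem.mp hw' with rfl | ⟨a, ha, rfl⟩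
        · exact absurd rfl (ht0 _ hw)
        · simpa using ha
      have := le_depth hdag ⟨l.map (· - 1), hcd, hmem, rfl⟩
      simp only [List.length_map] at this
      omega
  · obtain ⟨l, hc, hm, hl⟩ := exists_depth_chain (P := P) hdag
    by_cases hne : l = []
    · subst hne
      simp only [List.length_nil] at hl
      have h1 := le_depth (cone_dag hdag)
        ⟨[0], by simp [List.Chain'], by intro x hx; simp at hx; subst hx; exact cone_mem.mpr (Or.inl rfl), rfl⟩
      simp only [List.length_cons, List.length_nil] at h1
      omega
    · obtain ⟨m, hmc, hmm, hlen, r, hhead, hroot⟩ := extend_to_root hdag hc hm hne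
      have hchain : (0 :: m.map (· + 1)).Chain' (cone P).Adj := by
        rw [List.Chain', List.isChain_cons]
        refine ⟨?_, cone_chain_up hmc⟩
        intro y hy
        rw [List.head?_map, hhead] at hy
        simp only [Option.map_some, Option.mem_def, Option.some.injEq] at hy
        subst hy
        exact Or.inr ⟨rfl, r, hroot, rfl⟩
      have hmemc : ∀ x ∈ 0 :: m.map (· + 1), x ∈ (cone P).verts := by
        intro x hx
        rcases List.mem_cons.mp hx with rfl | hx
        · exact cone_mem.mpr (Or.inl rfl)
        · obtain ⟨w, hw, rfl⟩ := List.mem_map.mp hx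
          exact cone_mem.mpr (Or.inr ⟨w, hmm w hw, rfl⟩)
      have := le_depth (cone_dag hdag) ⟨_, hchain, hmemc, rfl⟩
      simp only [List.length_cons, List.length_map] at this
      omega

lemma cone_rootPath {P : FinDigraph ℕ} {l : List ℕ} {a : ℕ}
    (h : (cone P).IsRootPath l (a + 1)) :
    l.head? = some 0 ∧ (∀ x ∈ l.tail, x ≠ 0) ∧ IsRootPath P (l.tail.map (· - 1)) a := by
  obtain ⟨hne, hc, hm, ⟨r, hhd, hroot⟩, hlast⟩ := h
  obtain ⟨x0, t, rfl⟩ := List.exists_cons_of_ne_nil hne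
  have hx0 : x0 = r := by simpa using hhd
  subst hx0
  have hr0 : x0 = 0 := cone_root_eq_zero hroot
  subst hr0
  have ht0 : ∀ x ∈ t, x ≠ 0 := by
    intro z hz hz0
    subst hz0
    obtain ⟨p, hp⟩ := chain'_pred 0 t hc 0 hz
    exact cone_no_in_zero hp
  have htne : t ≠ [] := by
    rintro rfl
    simp at hlast
  refine ⟨rfl, by simpa using ht0, ?_, ?_, ?_, ?_, ?_⟩
  · simp [htne]
  · exact cone_chain_down t hc.tail ht0
  · intro z hz
    obtain ⟨w, hw, rfl⟩ := List.mem_map.mp hz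
    simp only [List.tail_cons] at hw
    have hw' := hm w (List.mem_cons_of_mem _ hw)
    rcases cone_mem.mp hw' with rfl | ⟨b, hb, rfl⟩
    · exact absurd rfl (ht0 _ hw)
    · simpa using hb
  · -- head of the projected list is a root of P
    obtain ⟨y, t', rfl⟩ := List.exists_cons_of_ne_nil htne
    have hadj : (cone P).Adj 0 y := (List.isChain_cons_cons.mp hc).1
    rcases hadj with ⟨c, d, hcd, hc0, rfl⟩ | ⟨-, r', hr', rfl⟩
    · omega
    · exact ⟨r', by simp, hr'⟩
  · rw [List.tail_cons, List.getLast?_map]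
    have : t.getLast? = some (a + 1) := by
      obtain ⟨y, t', rfl⟩ := List.exists_cons_of_ne_nil htne
      rw [List.getLast?_cons_cons] at hlast
      exact hlast
    rw [this]
    simp

/-! ### Disjoint union of an indexed family of DAGs -/

/-- Disjoint union of the digraphs `Ps 0, …, Ps (n-1)`, encoded via `Nat.pair`. -/
def unionD (Ps : ℕ → FinDigraph ℕ) (n : ℕ) : FinDigraph ℕ where
  verts := (Finset.range n).biUnion fun i => (Ps i).verts.image (Nat.pair i)
  Adj x y := ∃ i < n, ∃ a b, (Ps i).Adj a b ∧ x = Nat.pair i a ∧ y = Nat.pair i b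
  adj_mem := by
    rintro u v ⟨i, hi, a, b, hab, rfl, rfl⟩
    exact ⟨Finset.mem_biUnion.mpr ⟨i, Finset.mem_range.mpr hi,
        Finset.mem_image_of_mem _ ((Ps i).adj_mem a b hab).1⟩,
      Finset.mem_biUnion.mpr ⟨i, Finset.mem_range.mpr hi,
        Finset.mem_image_of_mem _ ((Ps i).adj_mem a b hab).2⟩⟩

lemma unionD_mem {Ps : ℕ → FinDigraph ℕ} {n x : ℕ} :
    x ∈ (unionD Ps n).verts ↔ ∃ i < n, ∃ a ∈ (Ps i).verts, x = Nat.pair i a := by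
  constructor
  · intro h
    obtain ⟨i, hi, h⟩ := Finset.mem_biUnion.mp h
    obtain ⟨a, ha, rfl⟩ := Finset.mem_image.mp h
    exact ⟨i, Finset.mem_range.mp hi, a, ha, rfl⟩
  · rintro ⟨i, hi, a, ha, rfl⟩
    exact Finset.mem_biUnion.mpr ⟨i, Finset.mem_range.mpr hi, Finset.mem_image_of_mem _ ha⟩

lemma unionD_transGen {Ps : ℕ → FinDigraph ℕ} {n x y : ℕ}
    (h : Relation.TransGen (unionD Ps n).Adj x y) :
    ∃ i < n, ∃ a b, x = Nat.pair i a ∧ y = Nat.pair i b ∧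
      Relation.TransGen (Ps i).Adj a b := by
  induction h with
  | single h =>
    obtain ⟨i, hi, a, b, hab, rfl, rfl⟩ := h
    exact ⟨i, hi, a, b, rfl, rfl, .single hab⟩
  | tail hxz hstep ih =>
    obtain ⟨j, hj, c, d, hcd, hzc, rfl⟩ := hstep
    obtain ⟨i, hi, a, b, rfl, hzb, htg⟩ := ih
    obtain ⟨rfl, rfl⟩ := Nat.pair_eq_pair.mp (hzb.symm.trans hzc)
    exact ⟨i, hi, a, d, rfl, rfl, htg.tail hcd⟩

lemma unionD_dag {Ps : ℕ → FinDigraph ℕ} {n : ℕ} (h : ∀ i < n, (Ps i).IsDag) :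
    (unionD Ps n).IsDag := by
  intro v hv
  obtain ⟨i, hi, a, b, ha, hb, htg⟩ := unionD_transGen hv
  obtain ⟨-, rfl⟩ := Nat.pair_eq_pair.mp (ha.symm.trans hb)
  exact h i hi a htg

lemma unionD_chain {Ps : ℕ → FinDigraph ℕ} {n : ℕ} :
    ∀ (t : List ℕ) (i a : ℕ), i < n → a ∈ (Ps i).verts →
      (Nat.pair i a :: t).Chain' (unionD Ps n).Adj →
      ((Nat.pair i a :: t).map fun x => x.unpair.2).Chain' (Ps i).Adj ∧
      ∀ x ∈ Nat.pair i a :: t, x = Nat.pair i x.unpair.2 ∧ x.unpair.2 ∈ (Ps i).verts := by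
  intro t
  induction t with
  | nil =>
    intro i a hi ha _
    refine ⟨by simp [List.Chain'], ?_⟩
    intro x hx
    simp only [List.mem_singleton] at hx
    subst hx
    simp [Nat.unpair_pair, ha]
  | cons y t ih =>
    intro i a hi ha hc
    obtain ⟨hadj, hc'⟩ := List.isChain_cons_cons.mp hc
    obtain ⟨j, hj, c, d, hcd, hpc, rfl⟩ := hadj
    obtain ⟨rfl, rfl⟩ := Nat.pair_eq_pair.mp hpc
    have hd : d ∈ (Ps i).verts := ((Ps i).adj_mem _ _ hcd).2
    obtain ⟨hchain, hmem⟩ := ih i d hi hd hc'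
    constructor
    · simp only [List.map_cons, Nat.unpair_pair] at hchain ⊢
      exact List.isChain_cons_cons.mpr ⟨hcd, hchain⟩
    · intro x hx
      rcases List.mem_cons.mp hx with rfl | hx
      · simp [Nat.unpair_pair, ha]
      · exact hmem x hx

lemma unionD_root {Ps : ℕ → FinDigraph ℕ} {n r : ℕ} (h : (unionD Ps n).IsRoot r) :
    ∃ i < n, ∃ a, r = Nat.pair i a ∧ (Ps i).IsRoot a := by
  obtain ⟨hv, hno⟩ := h
  obtain ⟨i, hi, a, ha, rfl⟩ := unionD_mem.mp hv
  refine ⟨i, hi, a, rfl, ha, ?_⟩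
  intro u hu
  exact hno (Nat.pair i u) ⟨i, hi, u, a, hu, rfl, rfl⟩

lemma unionD_desc {Ps : ℕ → FinDigraph ℕ} {n i a b : ℕ} (hi : i < n)
    (h : Relation.ReflTransGen (Ps i).Adj a b) :
    Relation.ReflTransGen (unionD Ps n).Adj (Nat.pair i a) (Nat.pair i b) :=
  Relation.ReflTransGen.lift (p := (unionD Ps n).Adj) (fun x => Nat.pair i x)
    (fun x y hxy => ⟨i, hi, x, y, hxy, rfl, rfl⟩) _ _ h

lemma unionD_rootPath {Ps : ℕ → FinDigraph ℕ} {n i a : ℕ} (hi : i < n)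
    {l : List ℕ} (h : (unionD Ps n).IsRootPath l (Nat.pair i a)) :
    IsRootPath (Ps i) (l.map fun x => x.unpair.2) a ∧
      ∀ x ∈ l, x = Nat.pair i x.unpair.2 := by
  obtain ⟨hne, hc, hm, ⟨r, hhd, hroot⟩, hlast⟩ := h
  obtain ⟨x0, t, rfl⟩ := List.exists_cons_of_ne_nil hne
  have hx0 : x0 = r := by simpa using hhd
  subst hx0
  obtain ⟨j, hj, c, rfl, hcroot⟩ := unionD_root hroot
  obtain ⟨hchain, hmem⟩ := unionD_chain t j c hj hcroot.1 hc
  have hlastmem : Nat.pair i a ∈ Nat.pair j c :: t := mem_of_getLast?' hlast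
  obtain ⟨hEq, -⟩ := hmem _ hlastmem
  have hji : j = i := by
    have := (Nat.pair_eq_pair.mp hEq).1
    omega
  subst hji
  refine ⟨⟨by simp, hchain, ?_, ?_, ?_⟩, fun x hx => (hmem x hx).1⟩
  · intro z hz
    obtain ⟨x, hx, rfl⟩ := List.mem_map.mp hz
    exact (hmem x hx).2
  · refine ⟨c, ?_, hcroot⟩
    simp [Nat.unpair_pair]
  · rw [List.getLast?_map, hlast]
    simp [Nat.unpair_pair]

lemma unionD_depth_le {Ps : ℕ → FinDigraph ℕ} {n : ℕ} (hdag : ∀ i < n, (Ps i).IsDag)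
    {m : ℕ} (hbound : ∀ i < n, depth (Ps i) ≤ m) : depth (unionD Ps n) ≤ m := by
  apply depth_le
  rintro k ⟨l, hc, hm, rfl⟩
  cases l with
  | nil => simp
  | cons x t =>
    have hx := hm x (by simp)
    obtain ⟨i, hi, a, ha, rfl⟩ := unionD_mem.mp hx
    obtain ⟨hchain, hmem⟩ := unionD_chain t i a hi ha hc
    have hmm : ∀ z ∈ (Nat.pair i a :: t).map fun x => x.unpair.2, z ∈ (Ps i).verts := by
      intro z hz
      obtain ⟨x, hx', rfl⟩ := List.mem_map.mp hz
      exact (hmem x hx').2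
    have h1 := le_depth (hdag i hi) ⟨_, hchain, hmm, rfl⟩
    simp only [List.length_map] at h1
    exact h1.trans (hbound i hi)

lemma unionD_depth_ge {Ps : ℕ → FinDigraph ℕ} {n : ℕ} (hdagU : (unionD Ps n).IsDag)
    {i : ℕ} (hi : i < n) (hdi : (Ps i).IsDag) :
    depth (Ps i) ≤ depth (unionD Ps n) := by
  obtain ⟨l, hc, hm, hl⟩ := exists_depth_chain hdi
  have h1 := le_depth hdagU (n := (l.map (Nat.pair i)).length)
    ⟨l.map (Nat.pair i), ?_, ?_, rfl⟩
  · simpa [hl] using h1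
  · rw [List.Chain', List.isChain_map]
    exact List.IsChain.imp (fun a b h => ⟨i, hi, a, b, h, rfl, rfl⟩) hc
  · intro z hz
    obtain ⟨w, hw, rfl⟩ := List.mem_map.mp hz
    exact unionD_mem.mpr ⟨i, hi, w, hm w hw, rfl⟩

/-! ### Main construction -/

lemma main_aux : ∀ (N : ℕ) (D : FinDigraph α), D.verts.card ≤ N → D.verts.Nonempty →
    ∃ (P : FinDigraph ℕ) (org : ℕ → α), IsValidDecomp D P org ∧ depth P = ddp D := by
  intro N
  induction N with
  | zero =>
    intro D hle hne
    have := Finset.card_pos.mpr hne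
    omega
  | succ N ih =>
    intro D hle hne
    obtain ⟨v₀, hv₀⟩ := hne
    by_cases h1 : D.verts.card = 1
    · -- singleton digraph
      obtain ⟨w, hw⟩ := Finset.card_eq_one.mp h1
      have hv0w : v₀ = w := by rw [hw] at hv₀; simpa using hv₀
      subst hv0w
      refine ⟨singleP, fun _ => v₀, ⟨singleP_dag, ?_, ?_, ?_⟩,
        by rw [singleP_depth, ddp_of_card_one h1]⟩
      · intro v' _; exact hv₀
      · intro v hv
        have hveq : v = v₀ := by rw [hw] at hv; simpa using hv
        exact ⟨0, by simp [singleP], hveq.symm⟩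
      · intro v' hv' u hadj
        right
        intro l hl
        obtain ⟨hne', -, -, -, -⟩ := hl
        obtain ⟨x, t, rfl⟩ := List.exists_cons_of_ne_nil hne'
        have hu : u = v₀ := by
          have := (D.adj_mem _ u hadj).2
          rw [hw] at this
          simpa using this
        exact ⟨x, by simp, hu.symm⟩
    · have h2 : 2 ≤ D.verts.card := by
        have := Finset.card_pos.mpr ⟨v₀, hv₀⟩
        omega
      by_cases hf : D.fragments.card = 1
      · -- single fragment: peel off an optimal vertex
        obtain ⟨v, hv, hinf⟩ := Finset.exists_mem_eq_inf'
          (Finset.card_pos.mp (show 0 < D.verts.card by omega))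
          fun v => ddp (D.deleteVert v)
        have hD'verts : (D.deleteVert v).verts = D.verts.erase v := deleteVert_verts
        have hD'card : (D.deleteVert v).verts.card = D.verts.card - 1 := by
          rw [hD'verts, Finset.card_erase_of_mem hv]
        have hD'ne : (D.deleteVert v).verts.Nonempty := by
          rw [← Finset.card_pos]; omega
        obtain ⟨P', org', ⟨hdag', horg'mem, horg'surj, hcov'⟩, hdep'⟩ :=
          ih (D.deleteVert v) (by omega) hD'ne
        set org : ℕ → α := fun x => if x = 0 then v else org' (x - 1) with horg
        have org0 : org 0 = v := rfl
        have orgS : ∀ a : ℕ, org (a + 1) = org' a := fun a => by simp [horg]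
        refine ⟨cone P', org, ⟨cone_dag hdag', ?_, ?_, ?_⟩, ?_⟩
        · -- org maps into D.verts
          intro v' hv'
          rcases cone_mem.mp hv' with rfl | ⟨a, haP, rfl⟩
          · rw [org0]; exact hv
          · rw [orgS]
            have := horg'mem a haP
            rw [hD'verts] at this
            exact Finset.mem_of_mem_erase this
        · -- surjectivity
          intro u hu
          by_cases huv : u = v
          · exact ⟨0, cone_mem.mpr (Or.inl rfl), by rw [org0, huv]⟩
          · have huD' : u ∈ (D.deleteVert v).verts := by
              rw [hD'verts]; exact Finset.mem_erase.mpr ⟨huv, hu⟩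
            obtain ⟨a, haP, horga⟩ := horg'surj u huD'
            exact ⟨a + 1, cone_mem.mpr (Or.inr ⟨a, haP, rfl⟩), by rw [orgS, horga]⟩
        · -- neighbour cover
          intro v' hv' u hadj
          rcases cone_mem.mp hv' with rfl | ⟨a, haP, rfl⟩
          · rw [org0] at hadj
            by_cases huv : u = v
            · right
              intro l hl
              obtain ⟨hne', hc, hmm', ⟨r, hhd, hroot⟩, hlast⟩ := hl
              have hr0 : r = 0 := cone_root_eq_zero hroot
              subst hr0
              exact ⟨0, List.mem_of_mem_head? (by rw [hhd]; simp),
                by rw [org0, huv]⟩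
            · left
              have huD' : u ∈ (D.deleteVert v).verts := by
                rw [hD'verts]
                exact Finset.mem_erase.mpr ⟨huv, (D.adj_mem _ _ hadj).2⟩
              obtain ⟨a, haP, horga⟩ := horg'surj u huD'
              obtain ⟨r, hroot, hreach⟩ := exists_root_reach hdag' haP
              refine ⟨a + 1, cone_mem.mpr (Or.inr ⟨a, haP, rfl⟩), by rw [orgS, horga], ?_⟩
              exact Relation.ReflTransGen.head (Or.inr ⟨rfl, r, hroot, rfl⟩)
                (cone_desc_up hreach)
          · rw [orgS] at hadj
            by_cases huv : u = v
            · right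
              intro l hl
              obtain ⟨hhd0, -, -⟩ := cone_rootPath hl
              exact ⟨0, List.mem_of_mem_head? (by rw [hhd0]; simp),
                by rw [org0, huv]⟩
            · have huD' : u ∈ (D.deleteVert v).verts := by
                rw [hD'verts]
                exact Finset.mem_erase.mpr ⟨huv, (D.adj_mem _ _ hadj).2⟩
              have horg'a : org' a ∈ (D.deleteVert v).verts := horg'mem a haP
              have hadj' : (D.deleteVert v).Adj (org' a) u := by
                refine ⟨hadj, ?_, ?_⟩
                · rw [← hD'verts]; exact horg'a
                · rw [← hD'verts]; exact huD'
              rcases hcov' a haP u hadj' with ⟨u', hu'P, hu'org, hdesc⟩ | hpath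
              · left
                refine ⟨u' + 1, cone_mem.mpr (Or.inr ⟨u', hu'P, rfl⟩),
                  by rw [orgS, hu'org], ?_⟩
                exact cone_desc_up hdesc
              · right
                intro l hl
                obtain ⟨hhd0, htail0, hrp'⟩ := cone_rootPath hl
                obtain ⟨u', hu'mem, hu'org⟩ := hpath _ hrp'
                obtain ⟨x, hx, rfl⟩ := List.mem_map.mp hu'mem
                refine ⟨x, List.mem_of_mem_tail hx, ?_⟩
                have hx0 : x ≠ 0 := htail0 x hx
                obtain ⟨b, rfl⟩ : ∃ b, x = b + 1 := ⟨x - 1, by omega⟩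
                rw [orgS]
                simpa using hu'org
        · -- depth computation
          have hval : D.verts.inf' (Finset.card_pos.mp (show 0 < D.verts.card by omega))
              (fun v => ddp (D.deleteVert v)) = ddp (D.deleteVert v) := hinf
          calc depth (cone P') = depth P' + 1 := cone_depth hdag'
          _ = ddp (D.deleteVert v) + 1 := by rw [hdep']
          _ = ddp D := by
              rw [ddp_single_frag h2 hf]
              have := hval
              omega
      · -- several fragments
        set L := D.fragments.toList with hL
        have hLmem : ∀ R : Finset α, R ∈ L ↔ R ∈ D.fragments := fun R => Finset.mem_toList
        have Hex : ∀ R : Finset α, ∃ (P : FinDigraph ℕ) (org : ℕ → α),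
            R ∈ D.fragments →
              IsValidDecomp (D.induce R) P org ∧ depth P = ddp (D.induce R) := by
          intro R
          by_cases hR : R ∈ D.fragments
          · have hsub := (mem_fragments.mp hR).1
            have hvR : (D.induce R).verts = R := induce_verts hsub
            have hlt : R.card < D.verts.card := card_lt_of_frag hf hR
            have hneR : (D.induce R).verts.Nonempty := by
              rw [hvR]; exact frag_nonempty hR
            obtain ⟨P, org, h⟩ := ih (D.induce R) (by rw [hvR]; omega) hneR
            exact ⟨P, org, fun _ => h⟩
          · exact ⟨singleP, fun _ => v₀, fun h => absurd h hR⟩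
        choose PF orgF hPF using Hex
        set n := L.length with hn
        set Ps : ℕ → FinDigraph ℕ := fun i => PF (L.getD i ∅) with hPs
        set orgs : ℕ → α := fun x => orgF (L.getD x.unpair.1 ∅) x.unpair.2 with horgs
        have hfragi : ∀ i, i < n → L.getD i ∅ ∈ D.fragments := by
          intro i hi
          rw [List.getD_eq_getElem L ∅ hi]
          exact (hLmem _).mp (List.getElem_mem hi)
        have hvalid : ∀ i, i < n →
            IsValidDecomp (D.induce (L.getD i ∅)) (Ps i) (orgF (L.getD i ∅)) :=
          fun i hi => (hPF _ (hfragi i hi)).1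
        have hdepth : ∀ i, i < n → depth (Ps i) = ddp (D.induce (L.getD i ∅)) :=
          fun i hi => (hPF _ (hfragi i hi)).2
        have hdags : ∀ i, i < n → (Ps i).IsDag := fun i hi => (hvalid i hi).1
        have horgsi : ∀ i a : ℕ, orgs (Nat.pair i a) = orgF (L.getD i ∅) a := by
          intro i a
          simp [horgs, Nat.unpair_pair]
        have hidx : ∀ R ∈ D.fragments, ∃ i, ∃ hi : i < n, L.getD i ∅ = R := by
          intro R hR
          obtain ⟨⟨i, hi⟩, hgi⟩ := List.mem_iff_get.mp ((hLmem R).mpr hR)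
          exact ⟨i, hi, by rw [List.getD_eq_getElem L ∅ hi, ← hgi]; rfl⟩
        refine ⟨unionD Ps n, orgs, ⟨unionD_dag hdags, ?_, ?_, ?_⟩, ?_⟩
        · -- org maps into D.verts
          intro v' hv'
          obtain ⟨i, hi, a, haP, rfl⟩ := unionD_mem.mp hv'
          rw [horgsi]
          have := (hvalid i hi).2.1 a haP
          exact Finset.mem_of_mem_inter_left this
        · -- surjectivity
          intro v hv
          obtain ⟨R, hR, hsub⟩ := exists_fragment_superset hv
          have hvR : v ∈ R := hsub (mem_reachSet.mpr ⟨hv, .refl⟩)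
          obtain ⟨i, hi, hgi⟩ := hidx R hR
          have hvind : v ∈ (D.induce (L.getD i ∅)).verts := by
            rw [hgi]
            exact Finset.mem_inter.mpr ⟨hv, hvR⟩
          obtain ⟨a, haP, horga⟩ := (hvalid i hi).2.2.1 v hvind
          exact ⟨Nat.pair i a, unionD_mem.mpr ⟨i, hi, a, haP, rfl⟩, by rw [horgsi, horga]⟩
        · -- neighbour cover
          intro v' hv' u hadj
          obtain ⟨i, hi, a, haP, rfl⟩ := unionD_mem.mp hv'
          rw [horgsi] at hadj
          have horgmem : orgF (L.getD i ∅) a ∈ (D.induce (L.getD i ∅)).verts :=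
            (hvalid i hi).2.1 a haP
          have horgR : orgF (L.getD i ∅) a ∈ L.getD i ∅ :=
            (Finset.mem_inter.mp horgmem).2
          have hRfrag := hfragi i hi
          have huR : u ∈ L.getD i ∅ := by
            obtain ⟨-, ⟨s, hs, hRs⟩, -⟩ := mem_fragments.mp hRfrag
            have h1 : orgF (L.getD i ∅) a ∈ D.reachSet s := by
              rw [← hRs]; exact horgR
            rw [hRs]
            exact reachSet_closed h1 hadj
          have hadjR : (D.induce (L.getD i ∅)).Adj (orgF (L.getD i ∅) a) u :=
            ⟨hadj, horgR, huR⟩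
          rcases (hvalid i hi).2.2.2 a haP u hadjR with ⟨u', hu'P, hu'org, hdesc⟩ | hpath
          · left
            exact ⟨Nat.pair i u', unionD_mem.mpr ⟨i, hi, u', hu'P, rfl⟩,
              by rw [horgsi, hu'org], unionD_desc hi hdesc⟩
          · right
            intro l hl
            obtain ⟨hrp', hpairs⟩ := unionD_rootPath hi hl
            obtain ⟨u', hu'mem, hu'org⟩ := hpath _ hrp'
            obtain ⟨x, hx, rfl⟩ := List.mem_map.mp hu'mem
            refine ⟨x, hx, ?_⟩
            have hxp := hpairs x hx
            have : orgs x = orgF (L.getD i ∅) x.unpair.2 := by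
              conv_lhs => rw [hxp]
              rw [horgsi]
            rw [this]
            exact hu'org
        · -- depth computation
          rw [ddp_multi_frag h2 hf]
          apply le_antisymm
          · apply unionD_depth_le hdags
            intro i hi
            rw [hdepth i hi]
            exact Finset.le_sup (f := fun R => ddp (D.induce R)) (hfragi i hi)
          · apply Finset.sup_le
            intro R hR
            obtain ⟨i, hi, hgi⟩ := hidx R hR
            rw [← hgi, ← hdepth i hi]
            exact unionD_depth_ge (unionD_dag hdags) hi (hdags i hi)

end FinDigraph

open FinDigraph in
/-- For every nonempty finite digraph `D` with `ddp D = k` there is a valid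
DAG-depth decomposition of `D` of depth exactly `k`. -/
theorem exists_valid_decomp_of_depth_ddp {α : Type} (D : FinDigraph α)
    (hne : D.verts.Nonempty) (k : ℕ) (hk : ddp D = k) :
    ∃ (P : FinDigraph ℕ) (org : ℕ → α), IsValidDecomp D P org ∧ depth P = k := by
  subst hk
  exact main_aux D.verts.card D le_rfl hne
end
end

section
/- Let D be a finite digraph with |V(D)| > 1 having exactly one reachable fragment (equal to V(D)), let v ∈ V(D), and let (P', org') be a valid DAG-depth decomposition of D − v of depth d. Let P be the DAG obtained from P' by adding one new vertex r with an edge from r to every root of P', and extend org' to org by setting org(r) = v. Then (P, org) is a valid DAG-depth decomposition of D of depth d + 1. -/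
open scoped Classical

noncomputable section

namespace FinDigraph

/-- The DAG obtained from `P'` by adding one new vertex `r` with an edge from `r`
to every root of `P'`. -/
def addRoot {β : Type} [DecidableEq β] (P' : FinDigraph β) (r : β) : FinDigraph β where
  verts := insert r P'.verts
  Adj u v := P'.Adj u v ∨ (u = r ∧ P'.IsRoot v)
  adj_mem := by
    rintro u v (h | ⟨rfl, hv⟩)
    · exact ⟨Finset.mem_insert_of_mem (P'.adj_mem u v h).1,
        Finset.mem_insert_of_mem (P'.adj_mem u v h).2⟩
    · exact ⟨Finset.mem_insert_self _ _, Finset.mem_insert_of_mem hv.1⟩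

end FinDigraph

namespace FinDigraph

variable {β : Type} [DecidableEq β]

lemma addRoot_no_edge_into (P' : FinDigraph β) {r : β} (hr : r ∉ P'.verts) (u : β) :
    ¬ (P'.addRoot r).Adj u r := by
  rintro (h | ⟨rfl, h⟩)
  · exact hr (P'.adj_mem _ _ h).2
  · exact hr h.1

lemma addRoot_adj_target (P' : FinDigraph β) {r u w : β}
    (h : (P'.addRoot r).Adj u w) : w ∈ P'.verts := by
  rcases h with h | ⟨_, h⟩
  · exact (P'.adj_mem _ _ h).2
  · exact h.1

lemma addRoot_chain_mem (P' : FinDigraph β) {r : β} :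
    ∀ (l : List β) (a : β), List.Chain (P'.addRoot r).Adj a l → ∀ x ∈ l, x ∈ P'.verts := by
  intro l
  induction l with
  | nil => intro a _ x hx; simp at hx
  | cons b t ih =>
    intro a h x hx
    rw [List.Chain, List.isChain_cons_cons] at h
    rcases List.mem_cons.mp hx with rfl | hx
    · exact P'.addRoot_adj_target h.1
    · exact ih b h.2 x hx

lemma addRoot_chain_orig (P' : FinDigraph β) {r : β} (hr : r ∉ P'.verts) :
    ∀ (l : List β) (a : β), a ∈ P'.verts → List.Chain (P'.addRoot r).Adj a l →
      List.Chain P'.Adj a l := by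
  intro l
  induction l with
  | nil => intro a _ _; exact List.Chain.nil
  | cons b t ih =>
    intro a ha h
    rw [List.Chain, List.isChain_cons_cons] at h ⊢
    have hab : P'.Adj a b := by
      rcases h.1 with h' | ⟨rfl, _⟩
      · exact h'
      · exact absurd ha hr
    exact ⟨hab, ih b (P'.adj_mem _ _ hab).2 h.2⟩

lemma chain_transGen (P : FinDigraph β) :
    ∀ (l : List β) (a : β), List.Chain P.Adj a l → ∀ x ∈ l, Relation.TransGen P.Adj a x := by
  intro l
  induction l with
  | nil => intro a _ x hx; simp at hx
  | cons b t ih =>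
    intro a h x hx
    rw [List.Chain, List.isChain_cons_cons] at h
    rcases List.mem_cons.mp hx with rfl | hx
    · exact Relation.TransGen.single h.1
    · exact Relation.TransGen.head h.1 (ih b h.2 x hx)

lemma dag_chain'_nodup (P : FinDigraph β) (hdag : P.IsDag) :
    ∀ l : List β, List.Chain' P.Adj l → l.Nodup := by
  intro l
  induction l with
  | nil => simp
  | cons a t ih =>
    intro h
    have ht : List.Chain P.Adj a t := h
    refine List.nodup_cons.mpr ⟨?_, ih h.tail⟩
    intro hmem
    exact hdag a (P.chain_transGen t a ht a hmem)

lemma exists_root_desc_aux (P : FinDigraph β) (hdag : P.IsDag) :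
    ∀ (n : ℕ) (x : β), x ∈ P.verts →
      (P.verts.filter fun w => Relation.ReflTransGen P.Adj w x).card ≤ n →
      ∃ w, P.IsRoot w ∧ Relation.ReflTransGen P.Adj w x := by
  intro n
  induction n with
  | zero =>
    intro x hx hcard
    exfalso
    have hmem : x ∈ P.verts.filter fun w => Relation.ReflTransGen P.Adj w x :=
      Finset.mem_filter.mpr ⟨hx, Relation.ReflTransGen.refl⟩
    have := Finset.card_pos.mpr ⟨x, hmem⟩
    omega
  | succ n ih =>
    intro x hx hcard
    by_cases hroot : ∀ u, ¬ P.Adj u x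
    · exact ⟨x, ⟨hx, hroot⟩, Relation.ReflTransGen.refl⟩
    · push_neg at hroot
      obtain ⟨y, hy⟩ := hroot
      have hyv : y ∈ P.verts := (P.adj_mem _ _ hy).1
      have hsub : (P.verts.filter fun w => Relation.ReflTransGen P.Adj w y) ⊆
          (P.verts.filter fun w => Relation.ReflTransGen P.Adj w x) := by
        intro w hw
        rw [Finset.mem_filter] at hw ⊢
        exact ⟨hw.1, hw.2.tail hy⟩
      have hxnot : x ∉ (P.verts.filter fun w => Relation.ReflTransGen P.Adj w y) := by
        intro hmem
        exact hdag x (Relation.TransGen.tail' (Finset.mem_filter.mp hmem).2 hy)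
      have hxin : x ∈ (P.verts.filter fun w => Relation.ReflTransGen P.Adj w x) :=
        Finset.mem_filter.mpr ⟨hx, Relation.ReflTransGen.refl⟩
      have hlt : (P.verts.filter fun w => Relation.ReflTransGen P.Adj w y).card <
          (P.verts.filter fun w => Relation.ReflTransGen P.Adj w x).card :=
        Finset.card_lt_card ((Finset.ssubset_iff_of_subset hsub).mpr ⟨x, hxin, hxnot⟩)
      obtain ⟨w, hw, hwy⟩ := ih y hyv (by omega)
      exact ⟨w, hw, hwy.tail hy⟩

lemma exists_root_desc (P : FinDigraph β) (hdag : P.IsDag) (x : β) (hx : x ∈ P.verts) :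
    ∃ w, P.IsRoot w ∧ Relation.ReflTransGen P.Adj w x :=
  P.exists_root_desc_aux hdag _ x hx le_rfl

lemma addRoot_transGen_orig (P' : FinDigraph β) {r : β} (hr : r ∉ P'.verts) {a b : β}
    (h : Relation.TransGen (P'.addRoot r).Adj a b) :
    a ≠ r → Relation.TransGen P'.Adj a b := by
  induction h using Relation.TransGen.head_induction_on with
  | single h' =>
    intro ha
    rcases h' with h' | ⟨rfl, _⟩
    · exact Relation.TransGen.single h'
    · exact absurd rfl ha
  | head h' htg IH =>
    intro ha
    rcases h' with h' | ⟨rfl, _⟩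
    · have hc : _ ≠ r := fun hcr => hr (hcr ▸ (P'.adj_mem _ _ h').2)
      exact Relation.TransGen.head h' (IH hc)
    · exact absurd rfl ha

lemma addRoot_isDag (P' : FinDigraph β) (hdag : P'.IsDag) {r : β} (hr : r ∉ P'.verts) :
    (P'.addRoot r).IsDag := by
  intro w hw
  by_cases hwr : w = r
  · subst hwr
    obtain ⟨c, -, hc⟩ := Relation.TransGen.tail'_iff.mp hw
    exact P'.addRoot_no_edge_into hr c hc
  · exact hdag w (P'.addRoot_transGen_orig hr hw hwr)

lemma addRoot_root_eq (P' : FinDigraph β) {r : β} (hr : r ∉ P'.verts) {w : β}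
    (hw : (P'.addRoot r).IsRoot w) : w = r := by
  rcases Finset.mem_insert.mp hw.1 with rfl | hwm
  · rfl
  · exfalso
    by_cases hroot : P'.IsRoot w
    · exact hw.2 r (Or.inr ⟨rfl, hroot⟩)
    · obtain ⟨u, hu⟩ := not_forall.mp (fun h => hroot ⟨hwm, h⟩)
      exact hw.2 u (Or.inl (not_not.mp hu))

end FinDigraph

open FinDigraph in
/-- Let `D` be a digraph with more than one vertex having exactly one reachable
fragment, equal to `V(D)`; let `v ∈ V(D)` and let `(P', org')` be a valid DAG-depth
decomposition of `D − v` of depth `d`.  Adding a new vertex `r` joined to every root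
of `P'`, with `org r = v` and `org` agreeing with `org'` elsewhere, yields a valid
DAG-depth decomposition of `D` of depth `d + 1`. -/
theorem add_root_decomp {α β : Type} [DecidableEq β] (D : FinDigraph α)
    (hcard : 1 < D.verts.card)
    (hfrag : D.fragments = {D.verts})
    (v : α) (hv : v ∈ D.verts)
    (P' : FinDigraph β) (org' : β → α)
    (hvalid : IsValidDecomp (D.deleteVert v) P' org')
    (d : ℕ) (hd : depth P' = d)
    (r : β) (hr : r ∉ P'.verts)
    (org : β → α) (horgr : org r = v) (horg : ∀ x ∈ P'.verts, org x = org' x) :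
    IsValidDecomp D (P'.addRoot r) org ∧ depth (P'.addRoot r) = d + 1 := by
  classical
  have hdag' : P'.IsDag := hvalid.1
  have hdagA : (P'.addRoot r).IsDag := P'.addRoot_isDag hdag' hr
  have horg'mem : ∀ x ∈ P'.verts, org' x ∈ D.verts ∧ org' x ≠ v := by
    intro x hx
    have h := Finset.mem_inter.mp (hvalid.2.1 x hx)
    exact ⟨h.1, (Finset.mem_erase.mp h.2).1⟩
  have hsurj' : ∀ u ∈ D.verts, u ≠ v → ∃ u' ∈ P'.verts, org' u' = u := by
    intro u hu hne
    exact hvalid.2.2.1 u (Finset.mem_inter.mpr ⟨hu, Finset.mem_erase.mpr ⟨hne, hu⟩⟩)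
  have hvalid2 : IsValidDecomp D (P'.addRoot r) org := by
    refine ⟨hdagA, ?_, ?_, ?_⟩
    · intro x hx
      rcases Finset.mem_insert.mp hx with rfl | hx
      · rw [horgr]; exact hv
      · rw [horg x hx]; exact (horg'mem x hx).1
    · intro u hu
      by_cases hue : u = v
      · exact ⟨r, Finset.mem_insert_self _ _, hue ▸ horgr⟩
      · obtain ⟨u', hu', he⟩ := hsurj' u hu hue
        exact ⟨u', Finset.mem_insert_of_mem hu', (horg u' hu').trans he⟩
    · intro v' hv' u hadj
      rcases Finset.mem_insert.mp hv' with rfl | hv'm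
      · by_cases hue : u = v
        · subst hue
          exact Or.inl ⟨v', Finset.mem_insert_self _ _, horgr, Relation.ReflTransGen.refl⟩
        · rw [horgr] at hadj
          obtain ⟨u', hu', he⟩ := hsurj' u (D.adj_mem _ _ hadj).2 hue
          obtain ⟨w, hwroot, hwdesc⟩ := P'.exists_root_desc hdag' u' hu'
          refine Or.inl ⟨u', Finset.mem_insert_of_mem hu', (horg u' hu').trans he, ?_⟩
          exact Relation.ReflTransGen.head (Or.inr ⟨rfl, hwroot⟩)
            (Relation.ReflTransGen.mono (fun a b h => Or.inl h) _ _ hwdesc)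
      · have hv'ne : org' v' ≠ v := (horg'mem v' hv'm).2
        by_cases hue : u = v
        · subst hue
          refine Or.inr ?_
          intro l hl
          obtain ⟨hlne, hlchain, hlmem, ⟨r0, hhead, hroot0⟩, hlast⟩ := hl
          have hr0 : r0 = r := P'.addRoot_root_eq hr hroot0
          exact ⟨r0, List.mem_of_mem_head? hhead, by rw [hr0, horgr]⟩
        · have hadj' : (D.deleteVert v).Adj (org' v') u := by
            refine ⟨?_, ?_, ?_⟩
            · rw [← horg v' hv'm]; exact hadj
            · exact Finset.mem_erase.mpr ⟨hv'ne, (horg'mem v' hv'm).1⟩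
            · rw [horg v' hv'm] at hadj
              exact Finset.mem_erase.mpr ⟨hue, (D.adj_mem _ _ hadj).2⟩
          rcases hvalid.2.2.2 v' hv'm u hadj' with ⟨u', hu', he, hdesc⟩ | hcov
          · exact Or.inl ⟨u', Finset.mem_insert_of_mem hu', (horg u' hu').trans he,
              Relation.ReflTransGen.mono (fun a b h => Or.inl h) _ _ hdesc⟩
          · refine Or.inr ?_
            intro l hl
            obtain ⟨hlne, hlchain, hlmem, ⟨r0, hhead, hroot0⟩, hlast⟩ := hl
            have hr0 : r0 = r := P'.addRoot_root_eq hr hroot0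
            obtain ⟨a, t, rfl⟩ := List.exists_cons_of_ne_nil hlne
            have ha0 : a = r0 := by simpa using hhead
            have ha : r = a := (ha0.trans hr0).symm
            subst ha
            have hv'r : v' ≠ r := fun h => hr (h ▸ hv'm)
            have htne : t ≠ [] := by
              rintro rfl
              simp at hlast
              exact hv'r hlast.symm
            obtain ⟨b, t', rfl⟩ := List.exists_cons_of_ne_nil htne
            have hchain0 : List.Chain (P'.addRoot r).Adj r (b :: t') := hlchain
            have htmem : ∀ x ∈ b :: t', x ∈ P'.verts :=
              P'.addRoot_chain_mem (b :: t') r hchain0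
            rw [List.Chain, List.isChain_cons_cons] at hchain0
            have hbroot : P'.IsRoot b := by
              rcases hchain0.1 with h' | ⟨_, h'⟩
              · exact absurd (P'.adj_mem _ _ h').1 hr
              · exact h'
            have hrp : IsRootPath P' (b :: t') v' := by
              refine ⟨by simp, ?_, htmem, ⟨b, rfl, hbroot⟩, ?_⟩
              · exact P'.addRoot_chain_orig hr t' b (htmem b (by simp)) hchain0.2
              · rw [List.getLast?_cons_cons] at hlast
                exact hlast
            obtain ⟨u', hu'mem, he⟩ := hcov (b :: t') hrp
            exact ⟨u', List.mem_cons_of_mem _ hu'mem,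
              (horg u' (htmem u' hu'mem)).trans he⟩
  refine ⟨hvalid2, ?_⟩
  set S1 : Set ℕ :=
    {n : ℕ | ∃ l : List β, l.Chain' P'.Adj ∧ (∀ x ∈ l, x ∈ P'.verts) ∧ l.length = n}
    with hS1def
  set S2 : Set ℕ := {n : ℕ | ∃ l : List β, l.Chain' (P'.addRoot r).Adj ∧
    (∀ x ∈ l, x ∈ (P'.addRoot r).verts) ∧ l.length = n} with hS2def
  have hd1 : sSup S1 = d := hd
  have hbdd1 : BddAbove S1 := by
    refine ⟨P'.verts.card, ?_⟩
    rintro n ⟨l, hc, hm, rfl⟩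
    have hnd := P'.dag_chain'_nodup hdag' l hc
    calc l.length = l.toFinset.card := (List.toFinset_card_of_nodup hnd).symm
      _ ≤ P'.verts.card := Finset.card_le_card fun x hx => hm x (List.mem_toFinset.mp hx)
  have hne1 : S1.Nonempty := ⟨0, [], by simp [List.Chain'], by simp, rfl⟩
  obtain ⟨u0, hu0, hu0ne⟩ := Finset.exists_mem_ne hcard v
  obtain ⟨x0, hx0, -⟩ := hsurj' u0 hu0 hu0ne
  have h1S1 : (1 : ℕ) ∈ S1 := ⟨[x0], by simp [List.Chain'], by simpa using hx0, rfl⟩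
  have hd1le : 1 ≤ d := hd1 ▸ le_csSup hbdd1 h1S1
  have hdS1 : d ∈ S1 := hd1 ▸ Nat.sSup_mem hne1 hbdd1
  obtain ⟨l, hc, hm, hlen⟩ := hdS1
  have hlne : l ≠ [] := by rintro rfl; simp at hlen; omega
  obtain ⟨a, t, rfl⟩ := List.exists_cons_of_ne_nil hlne
  have haroot : P'.IsRoot a := by
    by_contra hnot
    have hav : a ∈ P'.verts := hm a (by simp)
    obtain ⟨y, hy⟩ := not_forall.mp fun h => hnot ⟨hav, h⟩
    have hy' := not_not.mp hy
    have hmem : (d + 1) ∈ S1 := by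
      refine ⟨y :: a :: t, List.isChain_cons_cons.mpr ⟨hy', hc⟩, ?_, ?_⟩
      · intro x hx
        rcases List.mem_cons.mp hx with rfl | hx
        · exact (P'.adj_mem _ _ hy').1
        · exact hm x hx
      · simp only [List.length_cons] at hlen ⊢
        omega
    have := le_csSup hbdd1 hmem
    rw [hd1] at this
    omega
  have hd1S2 : d + 1 ∈ S2 := by
    refine ⟨r :: a :: t,
      List.isChain_cons_cons.mpr ⟨Or.inr ⟨rfl, haroot⟩, hc.imp fun a b h => Or.inl h⟩, ?_, ?_⟩
    · intro x hx
      rcases List.mem_cons.mp hx with rfl | hx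
      · exact Finset.mem_insert_self _ _
      · exact Finset.mem_insert_of_mem (hm x hx)
    · simp only [List.length_cons] at hlen ⊢
      omega
  have hub : ∀ m ∈ S2, m ≤ d + 1 := by
    rintro m ⟨l2, hc2, hm2, rfl⟩
    cases l2 with
    | nil => simp
    | cons a2 t2 =>
      have hchain2 : List.Chain (P'.addRoot r).Adj a2 t2 := hc2
      by_cases ha2 : a2 = r
      · have ha2' : r = a2 := ha2.symm
        subst ha2'
        have htm : ∀ x ∈ t2, x ∈ P'.verts := P'.addRoot_chain_mem t2 r hchain2
        have ht2S1 : t2.length ∈ S1 := by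
          refine ⟨t2, ?_, htm, rfl⟩
          cases t2 with
          | nil => simp [List.Chain']
          | cons b2 t2' =>
            rw [List.Chain, List.isChain_cons_cons] at hchain2
            exact P'.addRoot_chain_orig hr t2' b2 (htm b2 (by simp)) hchain2.2
        have hle := le_csSup hbdd1 ht2S1
        rw [hd1] at hle
        simp only [List.length_cons]
        omega
      · have hrnot : ∀ x ∈ t2, x ≠ r := by
          intro x hx hxr
          obtain ⟨c, -, hc'⟩ := Relation.TransGen.tail'_iff.mp
            ((P'.addRoot r).chain_transGen t2 a2 hchain2 x hx)
          rw [hxr] at hc'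
          exact P'.addRoot_no_edge_into hr c hc'
        have ha2v : a2 ∈ P'.verts := by
          rcases Finset.mem_insert.mp (hm2 a2 (by simp)) with h | h
          · exact absurd h ha2
          · exact h
        have hS1mem : (a2 :: t2).length ∈ S1 := by
          refine ⟨a2 :: t2, ?_, ?_, rfl⟩
          · exact P'.addRoot_chain_orig hr t2 a2 ha2v hchain2
          · intro x hx
            rcases List.mem_cons.mp hx with rfl | hx
            · exact ha2v
            · rcases Finset.mem_insert.mp (hm2 x (List.mem_cons_of_mem _ hx)) with h | h
              · exact absurd h (hrnot x hx)
              · exact h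
        have hle := le_csSup hbdd1 hS1mem
        rw [hd1] at hle
        omega
  show sSup S2 = d + 1
  exact le_antisymm (csSup_le ⟨d + 1, hd1S2⟩ hub) (le_csSup ⟨d + 1, hub⟩ hd1S2)
end
end
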